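/- arXiv:2209.08804 — 2 statements merged into one kernel-verified Lean document; each statement's English description precedes it below -/
import Mathlib

section
/- For every integer n ≥ 3, the wheel graph W_n has Frank number 2. -/
namespace Frank

variable {V : Type*}

/-- An orientation of a simple graph `G`: each edge gets exactly one direction. -/
structure Orient (G : SimpleGraph V) where
  dir : V → V → Prop
  dir_iff : ∀ u v, (dir u v ∨ dir v u) ↔ G.Adj u v
  not_both : ∀ u v, dir u v → ¬ dir v u

/-- A relation (digraph) is strongly connected. -/
def IsStrong (r : V → V → Prop) : Prop :=
  ∀ x y : V, Relation.ReflTransGen r x y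

/-- Delete the single arc `(u,v)` from the digraph `r`. -/
def delArc (r : V → V → Prop) (u v : V) : V → V → Prop :=
  fun a b => r a b ∧ ¬(a = u ∧ b = v)

/-- Delete (both possible arcs of) the edge `uv` from the digraph `r`. -/
def delEdge (r : V → V → Prop) (u v : V) : V → V → Prop :=
  fun a b => r a b ∧ ¬((a = u ∧ b = v) ∨ (a = v ∧ b = u))

/-- The edge `uv` is deletable in the orientation `O`: after removing its arc the
orientation stays strongly connected. -/
def EdgeDeletable {G : SimpleGraph V} (O : Orient G) (u v : V) : Prop :=
  IsStrong (delEdge O.dir u v)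

/-- The Frank number of `G`: the least `k` admitting `k` strongly connected orientations
such that every edge is deletable in at least one of them. -/
noncomputable def frankNumber (G : SimpleGraph V) : ℕ :=
  sInf {k | ∃ Os : Fin k → Orient G, (∀ i, IsStrong (Os i).dir) ∧
    ∀ u v, G.Adj u v → ∃ i, EdgeDeletable (Os i) u v}

/-- `G` is 2-edge-connected: connected and stays connected after deleting any single edge. -/
def TwoEdgeConn (G : SimpleGraph V) : Prop :=
  G.Connected ∧ ∀ e : Sym2 V, (G.deleteEdges {e}).Connected

/-- `G` is 3-edge-connected: connected and stays connected after deleting any two edges. -/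
def ThreeEdgeConn (G : SimpleGraph V) : Prop :=
  G.Connected ∧ ∀ e f : Sym2 V, (G.deleteEdges {e, f}).Connected

/-- The wheel `W n`: a hub (`none`) joined to a cycle on `ZMod n`. -/
def wheel (n : ℕ) : SimpleGraph (Option (ZMod n)) :=
  SimpleGraph.fromRel (fun a b => a = none ∨ ∃ i : ZMod n, a = some i ∧ b = some (i + 1))

/-! ### Auxiliary infrastructure -/

open Relation

lemma rtg_mono {r s : V → V → Prop} (h : ∀ a b, r a b → ReflTransGen s a b)
    {x y : V} (hx : ReflTransGen r x y) : ReflTransGen s x y := by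
  induction hx with
  | refl => exact ReflTransGen.refl
  | tail _ step ih => exact ih.trans (h _ _ step)

lemma delEdge_comm (r : V → V → Prop) (u v : V) : delEdge r u v = delEdge r v u := by
  funext a b
  rw [delEdge, delEdge, eq_iff_iff]
  tauto

lemma edgeDeletable_comm {G : SimpleGraph V} (O : Orient G) (u v : V)
    (h : EdgeDeletable O u v) : EdgeDeletable O v u := by
  unfold EdgeDeletable at *
  rwa [delEdge_comm]

lemma isStrong_delEdge_of_alt {r : V → V → Prop} (hr : IsStrong r) {u v : V}
    (h1 : r u v → ReflTransGen (delEdge r u v) u v)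
    (h2 : r v u → ReflTransGen (delEdge r u v) v u) :
    IsStrong (delEdge r u v) := by
  intro x y
  refine rtg_mono (fun a b hab => ?_) (hr x y)
  by_cases hc : (a = u ∧ b = v) ∨ (a = v ∧ b = u)
  · rcases hc with ⟨ha, hb⟩ | ⟨ha, hb⟩
    · subst ha; subst hb; exact h1 hab
    · subst ha; subst hb; exact h2 hab
  · exact ReflTransGen.single ⟨hab, hc⟩

lemma edgeDeletable_of_alt {G : SimpleGraph V} (O : Orient G) {u v : V}
    (h : IsStrong O.dir) (huv : O.dir u v)
    (alt : ReflTransGen (delEdge O.dir u v) u v) : EdgeDeletable O u v :=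
  isStrong_delEdge_of_alt h (fun _ => alt) (fun hvu => absurd huv (O.not_both v u hvu))

lemma exists_arc_into {r : V → V → Prop} {x y : V}
    (h : ReflTransGen r x y) (hxy : x ≠ y) : ∃ w, r w y := by
  induction h with
  | refl => exact absurd rfl hxy
  | tail _ step _ => exact ⟨_, step⟩

lemma exists_arc_out {r : V → V → Prop} {x y : V}
    (h : ReflTransGen r x y) (hxy : x ≠ y) : ∃ w, r x w := by
  rcases h.cases_head with rfl | ⟨c, hc, _⟩
  · exact absurd rfl hxy
  · exact ⟨c, hc⟩

/-! ### Wheel-specific infrastructure -/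

lemma cast_ne {n a b : ℕ} (ha : a < n) (hb : b < n) (hab : a ≠ b) :
    (a : ZMod n) ≠ (b : ZMod n) := by
  haveI : NeZero n := ⟨by omega⟩
  intro h
  have := congrArg ZMod.val h
  rw [ZMod.val_cast_of_lt ha, ZMod.val_cast_of_lt hb] at this
  exact hab this

def wDir {n : ℕ} (rd sd : ZMod n → Prop) : Option (ZMod n) → Option (ZMod n) → Prop
  | none, none => False
  | none, some j => sd j
  | some i, none => ¬ sd i
  | some i, some j => (j = i + 1 ∧ rd i) ∨ (i = j + 1 ∧ ¬ rd j)

lemma wheel_adj_some_some {n : ℕ} (hn : 3 ≤ n) (i j : ZMod n) :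
    (wheel n).Adj (some i) (some j) ↔ (j = i + 1 ∨ i = j + 1) := by
  haveI : NeZero n := ⟨by omega⟩
  rw [wheel, SimpleGraph.fromRel_adj]
  constructor
  · rintro ⟨hne, (h | ⟨k, hk1, hk2⟩) | (h | ⟨k, hk1, hk2⟩)⟩
    · exact absurd h (by simp)
    · left; cases hk1; cases hk2; rfl
    · exact absurd h (by simp)
    · right; cases hk1; cases hk2; rfl
  · have h10 : (1 : ZMod n) ≠ 0 := by
      have h' := cast_ne (n := n) (a := 1) (b := 0) (by omega) (by omega) (by omega)
      simpa using h'
    rintro (rfl | rfl)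
    · refine ⟨fun h => h10 ?_, Or.inl (Or.inr ⟨i, rfl, rfl⟩)⟩
      linear_combination -(Option.some.inj h)
    · refine ⟨fun h => h10 ?_, Or.inr (Or.inr ⟨j, rfl, rfl⟩)⟩
      linear_combination (Option.some.inj h)

lemma wheel_adj_none_some {n : ℕ} (hn : 3 ≤ n) (i : ZMod n) :
    (wheel n).Adj none (some i) := by
  rw [wheel, SimpleGraph.fromRel_adj]
  exact ⟨by simp, Or.inl (Or.inl rfl)⟩

def orientW (n : ℕ) (hn : 3 ≤ n) (rd sd : ZMod n → Prop) : Orient (wheel n) where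
  dir := wDir rd sd
  dir_iff := by
    haveI : NeZero n := ⟨by omega⟩
    have h2 : (2 : ZMod n) ≠ 0 := by
      have := cast_ne (n := n) (a := 2) (b := 0) (by omega) (by omega) (by omega)
      simpa using this
    intro u v
    match u, v with
    | none, none => simp [wDir, wheel, SimpleGraph.fromRel_adj]
    | none, some j =>
      simp only [wDir]
      rw [iff_true_right (wheel_adj_none_some hn j)]
      exact em (sd j)
    | some i, none =>
      simp only [wDir]
      rw [iff_true_right ((wheel_adj_none_some hn i).symm)]
      exact (em (sd i)).symm
    | some i, some j =>
      rw [wheel_adj_some_some hn]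
      simp only [wDir]
      constructor
      · rintro ((⟨h, _⟩ | ⟨h, _⟩) | (⟨h, _⟩ | ⟨h, _⟩))
        · exact Or.inl h
        · exact Or.inr h
        · exact Or.inr h
        · exact Or.inl h
      · rintro (rfl | rfl)
        · by_cases h : rd i
          · exact Or.inl (Or.inl ⟨rfl, h⟩)
          · exact Or.inr (Or.inr ⟨rfl, h⟩)
        · by_cases h : rd j
          · exact Or.inr (Or.inl ⟨rfl, h⟩)
          · exact Or.inl (Or.inr ⟨rfl, h⟩)
  not_both := by
    haveI : NeZero n := ⟨by omega⟩
    have h2 : (2 : ZMod n) ≠ 0 := by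
      have := cast_ne (n := n) (a := 2) (b := 0) (by omega) (by omega) (by omega)
      simpa using this
    intro u v h
    match u, v with
    | none, none => exact h.elim
    | none, some j => simp only [wDir] at *; tauto
    | some i, none => simp only [wDir] at *; tauto
    | some i, some j =>
      simp only [wDir] at h ⊢
      rintro (⟨g1, g2⟩ | ⟨g1, g2⟩) <;> rcases h with ⟨f1, f2⟩ | ⟨f1, f2⟩ <;>
        first
          | exact f2 g2
          | exact g2 f2
          | exact h2 (by linear_combination -f1 - g1)
          | exact h2 (by linear_combination f1 + g1)

/-! ### The two orientations -/

def sd1 (n : ℕ) : ZMod n → Prop := fun i => i.val + 2 < n ∨ (n = 3 ∧ i.val = 1)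
def sd2 (n : ℕ) : ZMod n → Prop := fun i => i.val % 2 = 0 ∧ i.val + 1 < n

def O1 (n : ℕ) (hn : 3 ≤ n) : Orient (wheel n) := orientW n hn (fun _ => True) (sd1 n)
def O2 (n : ℕ) (hn : 3 ≤ n) : Orient (wheel n) := orientW n hn (sd2 n) (sd2 n)

lemma cast_add_one {n : ℕ} (v : ℕ) : ((v : ZMod n)) + 1 = ((v + 1 : ℕ) : ZMod n) := by
  push_cast; ring

lemma rimChain {n : ℕ} {r : Option (ZMod n) → Option (ZMod n) → Prop}
    (hr : ∀ i : ZMod n, r (some i) (some (i + 1))) (a : ZMod n) (k : ℕ) :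
    ReflTransGen r (some a) (some (a + k)) := by
  induction k with
  | zero => simpa using ReflTransGen.refl
  | succ k ih =>
    have e : a + ((k + 1 : ℕ) : ZMod n) = (a + k) + 1 := by push_cast; ring
    rw [e]
    exact ih.tail (hr _)

lemma rimReach {n : ℕ} [NeZero n] {r : Option (ZMod n) → Option (ZMod n) → Prop}
    (hr : ∀ i : ZMod n, r (some i) (some (i + 1))) (a b : ZMod n) :
    ReflTransGen r (some a) (some b) := by
  have h := rimChain hr a ((b - a).val)
  rwa [ZMod.natCast_zmod_val, show a + (b - a) = b by ring] at h

lemma strong_hub {n : ℕ} {r : Option (ZMod n) → Option (ZMod n) → Prop}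
    (h1 : ∀ i : ZMod n, ReflTransGen r (some i) none)
    (h2 : ∀ i : ZMod n, ReflTransGen r none (some i)) : IsStrong r := by
  intro x y
  match x, y with
  | none, none => exact ReflTransGen.refl
  | none, some j => exact h2 j
  | some i, none => exact h1 i
  | some i, some j => exact (h1 i).trans (h2 j)

lemma O1_rim {n : ℕ} (hn : 3 ≤ n) (j : ZMod n) : (O1 n hn).dir (some j) (some (j + 1)) :=
  Or.inl ⟨rfl, trivial⟩

lemma O1_strong {n : ℕ} (hn : 3 ≤ n) : IsStrong (O1 n hn).dir := by
  haveI : NeZero n := ⟨by omega⟩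
  apply strong_hub
  · intro i
    refine (rimReach (O1_rim hn) i ((n - 1 : ℕ) : ZMod n)).tail ?_
    show ¬ sd1 n _
    rw [sd1, ZMod.val_cast_of_lt (by omega)]
    omega
  · intro i
    refine ReflTransGen.head (b := some 0) ?_ (rimReach (O1_rim hn) 0 i)
    show sd1 n 0
    rw [sd1, ZMod.val_zero]
    omega

lemma O2_strong {n : ℕ} (hn : 3 ≤ n) : IsStrong (O2 n hn).dir := by
  haveI : NeZero n := ⟨by omega⟩
  apply strong_hub
  · intro i
    by_cases hs : sd2 n i
    · -- i → i+1 → hub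
      have harc1 : (O2 n hn).dir (some i) (some (i + 1)) := Or.inl ⟨rfl, hs⟩
      have harc2 : (O2 n hn).dir (some (i + 1)) none := by
        show ¬ sd2 n (i + 1)
        obtain ⟨he, hl⟩ := hs
        rw [sd2]
        rw [← ZMod.natCast_zmod_val i, cast_add_one, ZMod.val_cast_of_lt (by omega)]
        omega
      exact (ReflTransGen.single harc1).tail harc2
    · exact ReflTransGen.single hs
  · intro i
    by_cases hs : sd2 n i
    · exact ReflTransGen.single hs
    · rw [sd2] at hs
      push_neg at hs
      by_cases hv : i.val + 1 < n
      · -- i.val odd; hub → (i.val - 1) → i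
        have hodd := hs
        have harc1 : (O2 n hn).dir none (some ((i.val - 1 : ℕ) : ZMod n)) := by
          show sd2 n _
          rw [sd2, ZMod.val_cast_of_lt (by omega)]
          have := i.val_lt
          constructor <;> omega
        have harc2 : (O2 n hn).dir (some ((i.val - 1 : ℕ) : ZMod n)) (some i) := by
          refine Or.inl ⟨?_, ?_⟩
          · rw [cast_add_one, show i.val - 1 + 1 = i.val by omega, ZMod.natCast_zmod_val]
          · show sd2 n _
            rw [sd2, ZMod.val_cast_of_lt (by omega)]
            constructor <;> omega
        exact (ReflTransGen.single harc1).tail harc2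
      · -- i.val = n - 1 ; hub → 0 → i
        have hv' : i.val = n - 1 := by have := i.val_lt; omega
        have harc1 : (O2 n hn).dir none (some 0) := by
          show sd2 n 0
          rw [sd2, ZMod.val_zero]
          omega
        have harc2 : (O2 n hn).dir (some 0) (some i) := by
          refine Or.inr ⟨?_, ?_⟩
          · rw [← ZMod.natCast_zmod_val i, cast_add_one, hv',
              show n - 1 + 1 = n by omega, ZMod.natCast_self]
          · show ¬ sd2 n i
            rw [sd2]
            omega
        exact (ReflTransGen.single harc1).tail harc2

/-! ### Deletability lemmas -/

lemma some_cast_ne {n a b : ℕ} (ha : a < n) (hb : b < n) (hab : a ≠ b) :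
    (some ((a : ℕ) : ZMod n) : Option (ZMod n)) ≠ some ((b : ℕ) : ZMod n) :=
  fun h => cast_ne ha hb hab (Option.some.inj h)

lemma sd2_cast {n : ℕ} [NeZero n] {a : ℕ} (ha : a < n) :
    sd2 n ((a : ℕ) : ZMod n) ↔ (a % 2 = 0 ∧ a + 1 < n) := by
  rw [sd2, ZMod.val_cast_of_lt ha]

lemma sd1_cast {n : ℕ} [NeZero n] {a : ℕ} (ha : a < n) :
    sd1 n ((a : ℕ) : ZMod n) ↔ (a + 2 < n ∨ (n = 3 ∧ a = 1)) := by
  rw [sd1, ZMod.val_cast_of_lt ha]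

lemma cast_succ_eq {n a b : ℕ} (h : b = a + 1 ∨ (b = 0 ∧ a + 1 = n)) :
    ((b : ℕ) : ZMod n) = ((a : ℕ) : ZMod n) + 1 := by
  rcases h with rfl | ⟨rfl, h⟩
  · rw [cast_add_one]
  · rw [cast_add_one, h, ZMod.natCast_self, Nat.cast_zero]

/-- O1 covers the rim edge from `n-1` to `0`. -/
lemma O1_del_rim_last {n : ℕ} (hn : 3 ≤ n) {v : ℕ} (hv : v = n - 1) :
    EdgeDeletable (O1 n hn) (some ((v : ℕ) : ZMod n)) (some (((v : ℕ) : ZMod n) + 1)) := by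
  haveI : NeZero n := ⟨by omega⟩
  subst hv
  refine edgeDeletable_of_alt _ (O1_strong hn) (O1_rim hn _) ?_
  have a1 : delEdge (O1 n hn).dir (some (((n-1 : ℕ) : ZMod n))) (some (((n-1 : ℕ) : ZMod n) + 1))
      (some ((n-1 : ℕ) : ZMod n)) none := by
    refine ⟨?_, by simp⟩
    show ¬ sd1 n _
    rw [sd1_cast (by omega)]
    omega
  have a2 : delEdge (O1 n hn).dir (some (((n-1 : ℕ) : ZMod n))) (some (((n-1 : ℕ) : ZMod n) + 1))
      none (some (((n-1 : ℕ) : ZMod n) + 1)) := by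
    refine ⟨?_, by simp⟩
    show sd1 n _
    rw [← cast_succ_eq (Or.inr ⟨rfl, by omega⟩), sd1_cast (by omega)]
    omega
  exact (ReflTransGen.single a1).tail a2

/-- O1 covers every in-spoke. -/
lemma O1_del_spoke_in {n : ℕ} (hn : 3 ≤ n) (i : ZMod n) (hs : sd1 n i) :
    EdgeDeletable (O1 n hn) none (some i) := by
  haveI : NeZero n := ⟨by omega⟩
  haveI : Fact (1 < n) := ⟨by omega⟩
  refine edgeDeletable_of_alt _ (O1_strong hn) hs ?_
  set j : ZMod n := if i = 0 then 1 else 0 with hj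
  have hjne : j ≠ i := by
    rcases eq_or_ne i 0 with h0 | h0
    · rw [hj, if_pos h0, h0]
      intro h
      have := congrArg ZMod.val h
      rw [ZMod.val_one, ZMod.val_zero] at this
      omega
    · rw [hj, if_neg h0]
      exact fun h => h0 h.symm
  have hjs : sd1 n j := by
    rcases eq_or_ne i 0 with h0 | h0
    · rw [hj, if_pos h0, sd1, ZMod.val_one]
      omega
    · rw [hj, if_neg h0, sd1, ZMod.val_zero]
      omega
  have a1 : delEdge (O1 n hn).dir none (some i) none (some j) := by
    refine ⟨hjs, ?_⟩
    rintro (⟨-, h⟩ | ⟨h, -⟩)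
    · exact hjne (Option.some.inj h)
    · exact nomatch h
  have hr : ∀ a : ZMod n, delEdge (O1 n hn).dir none (some i) (some a) (some (a + 1)) :=
    fun a => ⟨O1_rim hn a, by simp⟩
  exact ReflTransGen.head a1 (rimReach hr j i)

/-- O1 covers every out-spoke when `n ≥ 4`. -/
lemma O1_del_spoke_out {n : ℕ} (hn : 3 ≤ n) (hn4 : 4 ≤ n) {v : ℕ} (hv : v < n)
    (hs : ¬ sd1 n ((v : ℕ) : ZMod n)) :
    EdgeDeletable (O1 n hn) (some ((v : ℕ) : ZMod n)) none := by
  haveI : NeZero n := ⟨by omega⟩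
  have hvge : n - 2 ≤ v := by
    rw [sd1_cast hv] at hs
    omega
  refine edgeDeletable_of_alt _ (O1_strong hn) hs ?_
  set k : ℕ := if v = n - 1 then n - 2 else n - 1 with hk
  have hkv : k < n := by rw [hk]; split <;> omega
  have hkne : k ≠ v := by rw [hk]; split <;> omega
  have hks : ¬ sd1 n ((k : ℕ) : ZMod n) := by
    rw [sd1_cast hkv, hk]
    split <;> omega
  have hr : ∀ a : ZMod n, delEdge (O1 n hn).dir (some ((v : ℕ) : ZMod n)) none
      (some a) (some (a + 1)) := fun a => ⟨O1_rim hn a, by simp⟩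
  refine (rimReach hr _ ((k : ℕ) : ZMod n)).tail ?_
  refine ⟨hks, ?_⟩
  rintro (⟨h, -⟩ | ⟨h, -⟩)
  · exact some_cast_ne hkv hv hkne h
  · exact nomatch h

/-- O2 covers the out-spoke at `n-1` when `n` is odd (used for `n = 3`). -/
lemma O2_del_spoke_odd {n : ℕ} (hn : 3 ≤ n) (hodd : n % 2 = 1) {v : ℕ} (hv : v = n - 1) :
    EdgeDeletable (O2 n hn) (some ((v : ℕ) : ZMod n)) none := by
  haveI : NeZero n := ⟨by omega⟩
  subst hv
  have hdir : (O2 n hn).dir (some ((n - 1 : ℕ) : ZMod n)) none := by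
    show ¬ sd2 n _
    rw [sd2_cast (by omega)]
    omega
  refine edgeDeletable_of_alt _ (O2_strong hn) hdir ?_
  have a1 : delEdge (O2 n hn).dir (some ((n-1 : ℕ) : ZMod n)) none
      (some ((n-1 : ℕ) : ZMod n)) (some ((n-2 : ℕ) : ZMod n)) := by
    refine ⟨Or.inr ⟨cast_succ_eq (Or.inl (by omega)), ?_⟩, ?_⟩
    · rw [sd2_cast (by omega)]
      omega
    · rintro (⟨-, h⟩ | ⟨h, -⟩)
      · exact nomatch h
      · exact nomatch h
  have a2 : delEdge (O2 n hn).dir (some ((n-1 : ℕ) : ZMod n)) none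
      (some ((n-2 : ℕ) : ZMod n)) none := by
    refine ⟨?_, ?_⟩
    · show ¬ sd2 n _
      rw [sd2_cast (by omega)]
      omega
    · rintro (⟨h, -⟩ | ⟨h, -⟩)
      · exact some_cast_ne (by omega) (by omega) (by omega) h
      · exact nomatch h
  exact (ReflTransGen.single a1).tail a2

lemma pair_side {n : ℕ} {x y a b : ℕ} (hx : x < n) (hy : y < n) (ha : a < n) (hb : b < n)
    (h1 : x ≠ a ∨ y ≠ b) (h2 : x ≠ b ∨ y ≠ a) :
    ¬(((some ((x : ℕ) : ZMod n) : Option (ZMod n)) = some ((a : ℕ) : ZMod n) ∧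
        (some ((y : ℕ) : ZMod n) : Option (ZMod n)) = some ((b : ℕ) : ZMod n)) ∨
      ((some ((x : ℕ) : ZMod n) : Option (ZMod n)) = some ((b : ℕ) : ZMod n) ∧
        (some ((y : ℕ) : ZMod n) : Option (ZMod n)) = some ((a : ℕ) : ZMod n))) := by
  rintro (⟨h, h'⟩ | ⟨h, h'⟩)
  · rcases h1 with hne | hne
    · exact some_cast_ne hx ha hne h
    · exact some_cast_ne hy hb hne h'
  · rcases h2 with hne | hne
    · exact some_cast_ne hx hb hne h
    · exact some_cast_ne hy ha hne h'

/-- O2 covers rim edges with even lower index. -/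
lemma O2_del_rim_even {n : ℕ} (hn : 3 ≤ n) {v : ℕ} (hv : v + 1 < n) (he : v % 2 = 0) :
    EdgeDeletable (O2 n hn) (some ((v : ℕ) : ZMod n)) (some (((v : ℕ) : ZMod n) + 1)) := by
  haveI : NeZero n := ⟨by omega⟩
  rw [cast_add_one]
  have hdir : (O2 n hn).dir (some ((v : ℕ) : ZMod n)) (some ((v + 1 : ℕ) : ZMod n)) :=
    Or.inl ⟨cast_succ_eq (Or.inl rfl), (sd2_cast (by omega)).2 ⟨he, hv⟩⟩
  refine edgeDeletable_of_alt _ (O2_strong hn) hdir ?_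
  set D := delEdge (O2 n hn).dir (some ((v : ℕ) : ZMod n)) (some ((v + 1 : ℕ) : ZMod n)) with hD
  set p : ℕ := if v = 0 then n - 1 else v - 1 with hp
  have hplt : p < n := by rw [hp]; split <;> omega
  have a1 : D (some ((v : ℕ) : ZMod n)) (some ((p : ℕ) : ZMod n)) := by
    refine ⟨Or.inr ⟨cast_succ_eq (by rw [hp]; split <;> omega), ?_⟩, ?_⟩
    · rw [sd2_cast hplt]
      rw [hp]; split <;> omega
    · exact pair_side (by omega) hplt (by omega) (by omega)
        (Or.inr (by rw [hp]; split <;> omega)) (Or.inl (by omega))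
  have a2 : D (some ((p : ℕ) : ZMod n)) none := ⟨by
      show ¬ sd2 n _
      rw [sd2_cast hplt]
      rw [hp]; split <;> omega, by simp⟩
  rcases (by omega : v + 2 = n - 1 ∨ (v + 2 = n ∨ v + 2 < n - 1)) with hsp | hw
  · -- special case: v + 2 = n - 1 (n odd)
    have a3 : D none (some ((0 : ℕ) : ZMod n)) := ⟨by
        show sd2 n _
        rw [sd2_cast (by omega)]
        omega, by simp⟩
    have a4 : D (some ((0 : ℕ) : ZMod n)) (some ((n - 1 : ℕ) : ZMod n)) := by
      refine ⟨Or.inr ⟨cast_succ_eq (Or.inr ⟨rfl, by omega⟩), ?_⟩, ?_⟩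
      · rw [sd2_cast (by omega)]
        omega
      · exact pair_side (by omega) (by omega) (by omega) (by omega)
          (Or.inr (by omega)) (Or.inl (by omega))
    have a5 : D (some ((n - 1 : ℕ) : ZMod n)) (some ((v + 1 : ℕ) : ZMod n)) := by
      refine ⟨Or.inr ⟨cast_succ_eq (Or.inl (by omega)), ?_⟩, ?_⟩
      · rw [sd2_cast (by omega)]
        omega
      · exact pair_side (by omega) (by omega) (by omega) (by omega)
          (Or.inl (by omega)) (Or.inl (by omega))
    exact ((((ReflTransGen.single a1).tail a2).tail a3).tail a4).tail a5
  · -- generic case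
    set w : ℕ := if v + 2 = n then 0 else v + 2 with hww
    have hwlt : w < n := by rw [hww]; split <;> omega
    have a3 : D none (some ((w : ℕ) : ZMod n)) := ⟨by
        show sd2 n _
        rw [sd2_cast hwlt]
        rw [hww]; split <;> omega, by simp⟩
    have a4 : D (some ((w : ℕ) : ZMod n)) (some ((v + 1 : ℕ) : ZMod n)) := by
      refine ⟨Or.inr ⟨cast_succ_eq (by rw [hww]; split <;> omega), ?_⟩, ?_⟩
      · rw [sd2_cast (by omega)]
        omega
      · exact pair_side hwlt (by omega) (by omega) (by omega)
          (Or.inl (by rw [hww]; split <;> omega)) (Or.inl (by rw [hww]; split <;> omega))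
    exact (((ReflTransGen.single a1).tail a2).tail a3).tail a4

/-- O2 covers rim edges with odd lower index. -/
lemma O2_del_rim_odd {n : ℕ} (hn : 3 ≤ n) {v : ℕ} (hv : v + 1 < n) (he : v % 2 = 1) :
    EdgeDeletable (O2 n hn) (some ((v : ℕ) : ZMod n)) (some (((v : ℕ) : ZMod n) + 1)) := by
  haveI : NeZero n := ⟨by omega⟩
  rw [cast_add_one]
  refine edgeDeletable_comm _ _ _ ?_
  have hdir : (O2 n hn).dir (some ((v + 1 : ℕ) : ZMod n)) (some ((v : ℕ) : ZMod n)) := by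
    refine Or.inr ⟨cast_succ_eq (Or.inl rfl), ?_⟩
    rw [sd2_cast (by omega)]
    omega
  refine edgeDeletable_of_alt _ (O2_strong hn) hdir ?_
  set D := delEdge (O2 n hn).dir (some ((v + 1 : ℕ) : ZMod n)) (some ((v : ℕ) : ZMod n)) with hD
  have a3 : D none (some ((v - 1 : ℕ) : ZMod n)) := ⟨by
      show sd2 n _
      rw [sd2_cast (by omega)]
      omega, by simp⟩
  have a4 : D (some ((v - 1 : ℕ) : ZMod n)) (some ((v : ℕ) : ZMod n)) := by
    refine ⟨Or.inl ⟨cast_succ_eq (Or.inl (by omega)), ?_⟩, ?_⟩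
    · rw [sd2_cast (by omega)]
      omega
    · exact pair_side (by omega) (by omega) (by omega) (by omega)
        (Or.inl (by omega)) (Or.inl (by omega))
  rcases (by omega : v + 2 = n ∨ v + 2 < n) with hsp | hg
  · have a1 : D (some ((v + 1 : ℕ) : ZMod n)) none := ⟨by
        show ¬ sd2 n _
        rw [sd2_cast (by omega)]
        omega, by simp⟩
    exact ((ReflTransGen.single a1).tail a3).tail a4
  · have a1 : D (some ((v + 1 : ℕ) : ZMod n)) (some ((v + 2 : ℕ) : ZMod n)) := by
      refine ⟨Or.inl ⟨cast_succ_eq (Or.inl rfl), ?_⟩, ?_⟩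
      · rw [sd2_cast (by omega)]
        omega
      · exact pair_side (by omega) (by omega) (by omega) (by omega)
          (Or.inr (by omega)) (Or.inl (by omega))
    have a2 : D (some ((v + 2 : ℕ) : ZMod n)) none := ⟨by
        show ¬ sd2 n _
        rw [sd2_cast (by omega)]
        omega, by simp⟩
    exact (((ReflTransGen.single a1).tail a2).tail a3).tail a4

/-! ### Upper bound: two orientations suffice -/

lemma cast_pred_eq_neg_one {n : ℕ} (hn : 3 ≤ n) : ((n - 1 : ℕ) : ZMod n) = -1 := by
  have h : ((n - 1 : ℕ) : ZMod n) + 1 = 0 := by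
    rw [cast_add_one, show n - 1 + 1 = n by omega, ZMod.natCast_self]
  linear_combination h

lemma coverage {n : ℕ} (hn : 3 ≤ n) (u v : Option (ZMod n)) (h : (wheel n).Adj u v) :
    EdgeDeletable (O1 n hn) u v ∨ EdgeDeletable (O2 n hn) u v := by
  haveI : NeZero n := ⟨by omega⟩
  have spoke : ∀ i : ZMod n, EdgeDeletable (O1 n hn) none (some i) ∨
      EdgeDeletable (O2 n hn) none (some i) := by
    intro i
    by_cases hs : sd1 n i
    · exact Or.inl (O1_del_spoke_in hn i hs)
    · obtain ⟨w, hwlt, rfl⟩ : ∃ w : ℕ, w < n ∧ i = ((w : ℕ) : ZMod n) :=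
        ⟨i.val, i.val_lt, (ZMod.natCast_zmod_val i).symm⟩
      rcases (by omega : 4 ≤ n ∨ n = 3) with h4 | h3
      · exact Or.inl (edgeDeletable_comm _ _ _ (O1_del_spoke_out hn h4 hwlt hs))
      · have hw : w = n - 1 := by
          rw [sd1_cast hwlt] at hs
          omega
        exact Or.inr (edgeDeletable_comm _ _ _
          (O2_del_spoke_odd hn (by omega) hw))
  have rim : ∀ i : ZMod n, EdgeDeletable (O1 n hn) (some i) (some (i + 1)) ∨
      EdgeDeletable (O2 n hn) (some i) (some (i + 1)) := by
    intro i
    obtain ⟨w, hwlt, rfl⟩ : ∃ w : ℕ, w < n ∧ i = ((w : ℕ) : ZMod n) :=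
      ⟨i.val, i.val_lt, (ZMod.natCast_zmod_val i).symm⟩
    rcases (by omega : w = n - 1 ∨ (w + 1 < n ∧ w % 2 = 0) ∨ (w + 1 < n ∧ w % 2 = 1))
      with hw | ⟨hw, he⟩ | ⟨hw, he⟩
    · exact Or.inl (O1_del_rim_last hn hw)
    · exact Or.inr (O2_del_rim_even hn hw he)
    · exact Or.inr (O2_del_rim_odd hn hw he)
  match u, v with
  | none, none => exact absurd rfl h.ne
  | none, some i => exact spoke i
  | some i, none =>
    rcases spoke i with h' | h'
    · exact Or.inl (edgeDeletable_comm _ _ _ h')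
    · exact Or.inr (edgeDeletable_comm _ _ _ h')
  | some i, some j =>
    rcases (wheel_adj_some_some hn i j).1 h with rfl | rfl
    · exact rim i
    · rcases rim j with h' | h'
      · exact Or.inl (edgeDeletable_comm _ _ _ h')
      · exact Or.inr (edgeDeletable_comm _ _ _ h')

lemma two_mem {n : ℕ} (hn : 3 ≤ n) :
    2 ∈ {k | ∃ Os : Fin k → Orient (wheel n), (∀ i, IsStrong (Os i).dir) ∧
      ∀ u v, (wheel n).Adj u v → ∃ i, EdgeDeletable (Os i) u v} := by
  refine ⟨![O1 n hn, O2 n hn], ?_, ?_⟩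
  · intro i
    fin_cases i
    · exact O1_strong hn
    · exact O2_strong hn
  · intro u v h
    rcases coverage hn u v h with h' | h'
    · exact ⟨0, h'⟩
    · exact ⟨1, h'⟩

/-! ### Lower bound -/

lemma no_arc_in {r : V → V → Prop} {x y : V} (hstrong : IsStrong r) (hxy : y ≠ x)
    (h : ∀ w, ¬ r w x) : False := by
  obtain ⟨w, hw⟩ := exists_arc_into (hstrong y x) hxy
  exact h w hw

lemma no_arc_out {r : V → V → Prop} {x y : V} (hstrong : IsStrong r) (hxy : x ≠ y)
    (h : ∀ w, ¬ r x w) : False := by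
  obtain ⟨w, hw⟩ := exists_arc_out (hstrong x y) hxy
  exact h w hw

lemma one_not_mem {n : ℕ} (hn : 3 ≤ n) :
    1 ∉ {k | ∃ Os : Fin k → Orient (wheel n), (∀ i, IsStrong (Os i).dir) ∧
      ∀ u v, (wheel n).Adj u v → ∃ i, EdgeDeletable (Os i) u v} := by
  haveI : NeZero n := ⟨by omega⟩
  rintro ⟨Os, hstrong, hcov⟩
  set O := Os 0 with hO
  have hOs : ∀ i : Fin 1, Os i = O := fun i => by rw [hO, Subsingleton.elim i 0]
  -- vertex x = some 0 and its three neighbours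
  set x : Option (ZMod n) := some 0 with hx
  set a : Option (ZMod n) := none with ha
  set b : Option (ZMod n) := some 1 with hb
  set c : Option (ZMod n) := some (-1) with hc
  have h10 : (1 : ZMod n) ≠ 0 := by
    have h' := cast_ne (n := n) (a := 1) (b := 0) (by omega) (by omega) (by omega)
    simpa using h'
  have hm0 : (-1 : ZMod n) ≠ 0 := by
    have h' := cast_ne (n := n) (a := n - 1) (b := 0) (by omega) (by omega) (by omega)
    rwa [cast_pred_eq_neg_one hn, Nat.cast_zero] at h'
  have hm1 : (-1 : ZMod n) ≠ 1 := by
    have h' := cast_ne (n := n) (a := n - 1) (b := 1) (by omega) (by omega) (by omega)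
    rwa [cast_pred_eq_neg_one hn, Nat.cast_one] at h'
  have hbx : b ≠ x := by rw [hb, hx]; exact fun h => h10 (Option.some.inj h)
  have adj_ax : (wheel n).Adj a x := wheel_adj_none_some hn 0
  have adj_bx : (wheel n).Adj b x := by
    rw [hb, hx, wheel_adj_some_some hn]
    right
    rw [zero_add]
  have adj_cx : (wheel n).Adj c x := by
    rw [hc, hx, wheel_adj_some_some hn]
    left
    rw [neg_add_cancel]
  -- every in- or out-neighbour of x is a, b or c
  have hnbr : ∀ w, (O.dir w x ∨ O.dir x w) → w = a ∨ w = b ∨ w = c := by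
    intro w hw
    have hadj : (wheel n).Adj w x := by
      rcases hw with hw | hw
      · exact (O.dir_iff w x).1 (Or.inl hw)
      · exact ((O.dir_iff x w).1 (Or.inl hw)).symm
    match w with
    | none => exact Or.inl rfl
    | some k =>
      rw [hx, wheel_adj_some_some hn] at hadj
      rcases hadj with hk | hk
      · refine Or.inr (Or.inr ?_)
        rw [hc]
        congr 1
        linear_combination -hk
      · refine Or.inr (Or.inl ?_)
        rw [hb]
        congr 1
        linear_combination hk
  -- the three edges each get a direction
  have eA := (O.dir_iff a x).2 adj_ax
  have eB := (O.dir_iff b x).2 adj_bx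
  have eC := (O.dir_iff c x).2 adj_cx
  have habc : a ≠ b ∧ a ≠ c ∧ b ≠ c := by
    refine ⟨by rw [ha, hb]; simp, by rw [ha, hc]; simp, ?_⟩
    rw [hb, hc]
    exact fun h => hm1 (Option.some.inj h).symm
  -- helper: if exactly the in-arcs into x are among S ⊆ {a,b,c} and the rest point out,
  -- derive a contradiction.
  have single_in : ∀ u, O.dir u x → (∀ w, w ≠ u → ¬ O.dir w x) → False := by
    intro u hu hothers
    have hadj : (wheel n).Adj u x := (O.dir_iff u x).1 (Or.inl hu)
    obtain ⟨i, hdel⟩ := hcov u x hadj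
    rw [hOs i] at hdel
    refine no_arc_in (x := x) hdel hbx ?_
    rintro w ⟨hw, hcond⟩
    rcases eq_or_ne w u with rfl | hne
    · exact hcond (Or.inl ⟨rfl, rfl⟩)
    · exact hothers w hne hw
  have single_out : ∀ u, O.dir x u → (∀ w, w ≠ u → ¬ O.dir x w) → False := by
    intro u hu hothers
    have hadj : (wheel n).Adj x u := (O.dir_iff x u).1 (Or.inl hu)
    obtain ⟨i, hdel⟩ := hcov x u hadj
    rw [hOs i] at hdel
    refine no_arc_out (x := x) hdel (Ne.symm hbx) ?_
    rintro w ⟨hw, hcond⟩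
    rcases eq_or_ne w u with rfl | hne
    · exact hcond (Or.inl ⟨rfl, rfl⟩)
    · exact hothers w hne hw
  have no_in_all : (¬ O.dir a x) → (¬ O.dir b x) → (¬ O.dir c x) → False := by
    intro pa pb pc
    refine no_arc_in (x := x) (hstrong 0) hbx ?_
    intro w hw
    rcases hnbr w (Or.inl hw) with rfl | rfl | rfl
    · exact pa hw
    · exact pb hw
    · exact pc hw
  have no_out_all : (¬ O.dir x a) → (¬ O.dir x b) → (¬ O.dir x c) → False := by
    intro pa pb pc
    refine no_arc_out (x := x) (hstrong 0) (Ne.symm hbx) ?_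
    intro w hw
    rcases hnbr w (Or.inr hw) with rfl | rfl | rfl
    · exact pa hw
    · exact pb hw
    · exact pc hw
  obtain ⟨hab, hac, hbc⟩ := habc
  by_cases pa : O.dir a x <;> by_cases pb : O.dir b x <;> by_cases pc : O.dir c x
  · -- all in: no out-arc at all
    exact no_out_all (fun h => O.not_both a x pa h) (fun h => O.not_both b x pb h)
      (fun h => O.not_both c x pc h)
  · -- a,b in, c out
    refine single_out c (eC.resolve_left pc) ?_
    intro w hwc hw
    rcases hnbr w (Or.inr hw) with rfl | rfl | rfl
    · exact O.not_both a x pa hw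
    · exact O.not_both b x pb hw
    · exact hwc rfl
  · refine single_out b (eB.resolve_left pb) ?_
    intro w hwb hw
    rcases hnbr w (Or.inr hw) with rfl | rfl | rfl
    · exact O.not_both a x pa hw
    · exact hwb rfl
    · exact O.not_both c x pc hw
  · refine single_in a pa ?_
    intro w hwa hw
    rcases hnbr w (Or.inl hw) with rfl | rfl | rfl
    · exact hwa rfl
    · exact pb hw
    · exact pc hw
  · refine single_out a (eA.resolve_left pa) ?_
    intro w hwa hw
    rcases hnbr w (Or.inr hw) with rfl | rfl | rfl
    · exact hwa rfl
    · exact O.not_both b x pb hw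
    · exact O.not_both c x pc hw
  · refine single_in b pb ?_
    intro w hwb hw
    rcases hnbr w (Or.inl hw) with rfl | rfl | rfl
    · exact pa hw
    · exact hwb rfl
    · exact pc hw
  · refine single_in c pc ?_
    intro w hwc hw
    rcases hnbr w (Or.inl hw) with rfl | rfl | rfl
    · exact pa hw
    · exact pb hw
    · exact hwc rfl
  · exact no_in_all pa pb pc

lemma zero_not_mem {n : ℕ} (hn : 3 ≤ n) :
    0 ∉ {k | ∃ Os : Fin k → Orient (wheel n), (∀ i, IsStrong (Os i).dir) ∧
      ∀ u v, (wheel n).Adj u v → ∃ i, EdgeDeletable (Os i) u v} := by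
  haveI : NeZero n := ⟨by omega⟩
  rintro ⟨Os, -, hcov⟩
  obtain ⟨i, -⟩ := hcov none (some 0) (wheel_adj_none_some hn 0)
  exact i.elim0

theorem stmt_6 (n : ℕ) (hn : 3 ≤ n) : frankNumber (wheel n) = 2 := by
  have h2 := two_mem hn
  refine le_antisymm (Nat.sInf_le h2) ?_
  have hmem := Nat.sInf_mem (⟨2, h2⟩ : Set.Nonempty _)
  rcases (by omega : frankNumber (wheel n) = 0 ∨ frankNumber (wheel n) = 1 ∨
      2 ≤ frankNumber (wheel n)) with h | h | h
  · rw [frankNumber] at h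
    rw [h] at hmem
    exact absurd hmem (zero_not_mem hn)
  · rw [frankNumber] at h
    rw [h] at hmem
    exact absurd hmem (one_not_mem hn)
  · exact h


end Frank
end

section
/- Let G be a 3-edge-connected graph and let v be a vertex of G of degree d ≤ 5 that is not a cut vertex. Then for every choice of perfect matching M between the neighbours of v and the new cycle vertices, the local cubic modification G_v(M) is 3-edge-connected. -/
namespace Frank

variable {V : Type*}

/-- The underlying relation of the local cubic modification of `G` at `v`:
`v` is replaced by a cycle on `ZMod d`, and `m` matches the cycle vertices to
the former neighbours of `v`. -/
def lcmRel (G : SimpleGraph V) (v : V) (d : ℕ) (m : ZMod d → V) :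
    ({w : V // w ≠ v} ⊕ ZMod d) → ({w : V // w ≠ v} ⊕ ZMod d) → Prop
  | Sum.inl w, Sum.inl w' => G.Adj w.1 w'.1
  | Sum.inl w, Sum.inr i => w.1 = m i
  | Sum.inr i, Sum.inr j => j = i + 1
  | Sum.inr _, Sum.inl _ => False

/-- The local cubic modification `G_v(M)` of `G` at `v` given the matching `m`. -/
def localCubicMod (G : SimpleGraph V) (v : V) (d : ℕ) (m : ZMod d → V) :
    SimpleGraph ({w : V // w ≠ v} ⊕ ZMod d) :=
  SimpleGraph.fromRel (lcmRel G v d m)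

section Aux


variable {G : SimpleGraph V} {v : V} {d : ℕ} {m : ZMod d → V}

lemma lcm_adj_inl {a b : {w : V // w ≠ v}} (h : G.Adj a.1 b.1) :
    (localCubicMod G v d m).Adj (Sum.inl a) (Sum.inl b) := by
  rw [localCubicMod, SimpleGraph.fromRel_adj]
  refine ⟨fun hc => ?_, Or.inl h⟩
  have : a = b := by simpa using hc
  exact h.ne (by rw [this])

lemma lcm_adj_match (i : ZMod d) (h : m i ≠ v) :
    (localCubicMod G v d m).Adj (Sum.inl ⟨m i, h⟩) (Sum.inr i) := by
  rw [localCubicMod, SimpleGraph.fromRel_adj]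
  exact ⟨by simp, Or.inl rfl⟩

lemma lcm_adj_cyc (hd : 3 ≤ d) (i : ZMod d) :
    (localCubicMod G v d m).Adj (Sum.inr i) (Sum.inr (i + 1)) := by
  haveI : NeZero d := ⟨by omega⟩
  haveI : Fact (1 < d) := ⟨by omega⟩
  rw [localCubicMod, SimpleGraph.fromRel_adj]
  refine ⟨fun hc => ?_, Or.inl rfl⟩
  have h1 : i = i + 1 := by simpa using hc
  exact one_ne_zero (left_eq_add.mp h1)

lemma two_ne_zero_zmod (hd : 3 ≤ d) : (2 : ZMod d) ≠ 0 := by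
  haveI : NeZero d := ⟨by omega⟩
  intro hc
  have : ((2 : ℕ) : ZMod d) = 0 := by push_cast; exact hc
  have := (ZMod.natCast_eq_zero_iff 2 d).mp this
  have := Nat.le_of_dvd (by norm_num) this
  omega

/-- main lemma: deleting any two edges keeps the modification connected. -/
lemma main_conn (G : SimpleGraph V) (h3 : ThreeEdgeConn G) (v : V) (d : ℕ)
    (hd3 : 3 ≤ d)
    (hnotcut : (G.induce {w : V | w ≠ v}).Connected)
    (m : ZMod d → V)
    (hr : Set.range m = G.neighborSet v)
    (e f : Sym2 ({w : V // w ≠ v} ⊕ ZMod d)) :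
    ((localCubicMod G v d m).deleteEdges {e, f}).Connected := by
  haveI : NeZero d := ⟨by omega⟩
  classical
  set G' := localCubicMod G v d m with hG'
  set H := G'.deleteEdges {e, f} with hH
  set D : Set (Sym2 ({w : V // w ≠ v} ⊕ ZMod d)) := {e, f} with hD
  -- m i is a neighbour of v
  have hmadj : ∀ i : ZMod d, G.Adj v (m i) := by
    intro i
    have : m i ∈ Set.range m := ⟨i, rfl⟩
    rw [hr] at this
    exact this
  have hmv : ∀ i : ZMod d, m i ≠ v := fun i => (hmadj i).ne'
  -- vertex map collapsing gadget to v
  set φ : ({w : V // w ≠ v} ⊕ ZMod d) → V := fun x => Sum.elim (fun w => w.1) (fun _ => v) x with hφ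
  set e' : Sym2 V := e.map φ with he'
  set f' : Sym2 V := f.map φ with hf'
  set G2 := G.deleteEdges {e', f'} with hG2
  have hG2conn : G2.Connected := h3.2 e' f'
  -- H adjacency for surviving G-edges
  have hGedge : ∀ (a b : {w : V // w ≠ v}), G2.Adj a.1 b.1 →
      H.Adj (Sum.inl a) (Sum.inl b) := by
    intro a b hab
    rw [hH, SimpleGraph.deleteEdges_adj]
    rw [hG2, SimpleGraph.deleteEdges_adj] at hab
    refine ⟨lcm_adj_inl hab.1, fun hc => hab.2 ?_⟩
    simp only [hD, Set.mem_insert_iff, Set.mem_singleton_iff] at hc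
    simp only [Set.mem_insert_iff, Set.mem_singleton_iff]
    rcases hc with hc | hc
    · left; rw [he', ← hc, Sym2.map_pair_eq]; simp [hφ]
    · right; rw [hf', ← hc, Sym2.map_pair_eq]; simp [hφ]
  -- H adjacency for surviving matching edges
  have hMedge : ∀ (i : ZMod d), G2.Adj v (m i) →
      H.Adj (Sum.inl ⟨m i, hmv i⟩) (Sum.inr i) := by
    intro i hvi
    rw [hH, SimpleGraph.deleteEdges_adj]
    rw [hG2, SimpleGraph.deleteEdges_adj] at hvi
    refine ⟨lcm_adj_match i (hmv i), fun hc => hvi.2 ?_⟩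
    simp only [hD, Set.mem_insert_iff, Set.mem_singleton_iff] at hc
    simp only [Set.mem_insert_iff, Set.mem_singleton_iff]
    rcases hc with hc | hc
    · left; rw [he', ← hc, Sym2.map_pair_eq]; simp [hφ, Sym2.eq_swap]
    · right; rw [hf', ← hc, Sym2.map_pair_eq]; simp [hφ, Sym2.eq_swap]
  by_cases hA : (∃ i j : ZMod d, e = s(Sum.inr i, Sum.inr j)) ∧
      (∃ i j : ZMod d, f = s(Sum.inr i, Sum.inr j))
  · -- Case A: both deleted edges live inside the cycle
    obtain ⟨⟨i₁, j₁, he1⟩, ⟨i₂, j₂, hf1⟩⟩ := hA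
    have hnotinl : ∀ (x : {w : V // w ≠ v} ⊕ ZMod d) (a : {w : V // w ≠ v}),
        s(Sum.inl a, x) ∉ D := by
      intro x a hc
      simp only [hD, Set.mem_insert_iff, Set.mem_singleton_iff] at hc
      rcases hc with hc | hc
      · rw [he1, Sym2.eq_iff] at hc
        rcases hc with ⟨hc, -⟩ | ⟨hc, -⟩ <;> exact Sum.inl_ne_inr hc
      · rw [hf1, Sym2.eq_iff] at hc
        rcases hc with ⟨hc, -⟩ | ⟨hc, -⟩ <;> exact Sum.inl_ne_inr hc
    have hGedgeA : ∀ (a b : {w : V // w ≠ v}), G.Adj a.1 b.1 →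
        H.Adj (Sum.inl a) (Sum.inl b) := by
      intro a b hab
      rw [hH, SimpleGraph.deleteEdges_adj]
      exact ⟨lcm_adj_inl hab, hnotinl _ _⟩
    have hMedgeA : ∀ (i : ZMod d), H.Adj (Sum.inl ⟨m i, hmv i⟩) (Sum.inr i) := by
      intro i
      rw [hH, SimpleGraph.deleteEdges_adj]
      exact ⟨lcm_adj_match i (hmv i), hnotinl _ _⟩
    -- lift walks of the induced graph
    have liftA : ∀ (a b : {w : V | w ≠ v}), (G.induce {w : V | w ≠ v}).Walk a b →
        H.Reachable (Sum.inl ⟨a.1, a.2⟩) (Sum.inl ⟨b.1, b.2⟩) := by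
      intro a b w
      induction w with
      | nil => exact SimpleGraph.Reachable.refl _
      | cons h p ih =>
        have hadj : G.Adj _ _ := h
        exact (hGedgeA _ _ hadj).reachable.trans ih
    have hreachinl : ∀ (a b : {w : V // w ≠ v}),
        H.Reachable (Sum.inl a) (Sum.inl b) := by
      intro a b
      obtain ⟨w⟩ := hnotcut.preconnected ⟨a.1, a.2⟩ ⟨b.1, b.2⟩
      exact liftA _ _ w
    have hattach : ∀ i : ZMod d, H.Reachable (Sum.inr i) (Sum.inl ⟨m i, hmv i⟩) :=
      fun i => (hMedgeA i).symm.reachable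
    constructor
    intro x y
    match x, y with
    | Sum.inl a, Sum.inl b => exact hreachinl a b
    | Sum.inl a, Sum.inr j => exact (hreachinl a _).trans (hattach j).symm
    | Sum.inr i, Sum.inl b => exact (hattach i).trans (hreachinl _ b)
    | Sum.inr i, Sum.inr j =>
      exact ((hattach i).trans (hreachinl _ _)).trans (hattach j).symm
  · -- Case B: at most one cycle edge is deleted
    have hone : ∀ i j : ZMod d, s(Sum.inr i, Sum.inr (i + 1)) ∈ D →
        s(Sum.inr j, Sum.inr (j + 1)) ∈ D → i = j := by
      intro i j hi hj
      simp only [hD, Set.mem_insert_iff, Set.mem_singleton_iff] at hi hj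
      have key : ∀ (i j : ZMod d), (s(Sum.inr i, Sum.inr (i + 1)) :
          Sym2 ({w : V // w ≠ v} ⊕ ZMod d)) = s(Sum.inr j, Sum.inr (j + 1)) → i = j := by
        intro i j hc
        rw [Sym2.eq_iff] at hc
        rcases hc with ⟨hc, -⟩ | ⟨hc1, hc2⟩
        · exact Sum.inr.inj hc
        · have h1 : i = j + 1 := Sum.inr.inj hc1
          have h2 : i + 1 = j := Sum.inr.inj hc2
          have h4 : (2 : ZMod d) = 0 := by linear_combination h2 - h1
          exact absurd h4 (two_ne_zero_zmod hd3)
      rcases hi with hi | hi <;> rcases hj with hj | hj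
      · exact key _ _ (hi.trans hj.symm)
      · exact absurd ⟨⟨_, _, hi.symm⟩, ⟨_, _, hj.symm⟩⟩ hA
      · exact absurd ⟨⟨_, _, hj.symm⟩, ⟨_, _, hi.symm⟩⟩ hA
      · exact key _ _ (hi.trans hj.symm)
    -- cycle edges that survive
    have hCedge : ∀ i : ZMod d, s(Sum.inr i, Sum.inr (i + 1)) ∉ D →
        H.Adj (Sum.inr i) (Sum.inr (i + 1)) := by
      intro i hni
      rw [hH, SimpleGraph.deleteEdges_adj]
      exact ⟨lcm_adj_cyc hd3 i, hni⟩
    -- every consecutive pair of cycle vertices is connected in H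
    have hstep : ∀ i : ZMod d, H.Reachable (Sum.inr i) (Sum.inr (i + 1)) := by
      intro i
      by_cases hmem : s(Sum.inr i, Sum.inr (i + 1)) ∈ D
      · have back : ∀ t : ℕ, t + 1 ≤ d →
            H.Reachable (Sum.inr (i + 1)) (Sum.inr (i + 1 + (t : ZMod d))) := by
          intro t
          induction t with
          | zero => intro _; simpa using SimpleGraph.Reachable.refl _
          | succ n ih =>
            intro hle
            refine (ih (by omega)).trans ?_
            have hnd : s(Sum.inr (i + 1 + (n : ZMod d)),
                Sum.inr (i + 1 + (n : ZMod d) + 1)) ∉ D := by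
              intro hc
              have := hone _ _ hc hmem
              have h0 : ((n + 1 : ℕ) : ZMod d) = 0 := by
                push_cast
                linear_combination this
              rw [ZMod.natCast_eq_zero_iff] at h0
              have := Nat.le_of_dvd (by omega) h0
              omega
            have : H.Adj (Sum.inr (i + 1 + (n : ZMod d)))
                (Sum.inr (i + 1 + (n : ZMod d) + 1)) := hCedge _ hnd
            have heq : (i + 1 + (n : ZMod d) + 1) = i + 1 + ((n + 1 : ℕ) : ZMod d) := by
              push_cast; ring
            rw [heq] at this
            exact this.reachable
        have hfin := back (d - 1) (by omega)
        have heq : i + 1 + ((d - 1 : ℕ) : ZMod d) = i := by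
          have : ((d : ℕ) : ZMod d) = 0 := ZMod.natCast_self d
          have h2 : (1 : ZMod d) + ((d - 1 : ℕ) : ZMod d) = 0 := by
            have : ((1 + (d - 1) : ℕ) : ZMod d) = ((d : ℕ) : ZMod d) := by
              congr 1; omega
            push_cast at this
            rw [this, ZMod.natCast_self]
          linear_combination h2
        rw [heq] at hfin
        exact hfin.symm
      · exact (hCedge i hmem).reachable
    have hfwd : ∀ (i : ZMod d) (t : ℕ), H.Reachable (Sum.inr i) (Sum.inr (i + (t : ZMod d))) := by
      intro i t
      induction t with
      | zero => simpa using SimpleGraph.Reachable.refl _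
      | succ n ih =>
        have heq : i + ((n + 1 : ℕ) : ZMod d) = (i + (n : ZMod d)) + 1 := by
          push_cast; ring
        rw [heq]
        exact ih.trans (hstep _)
    have hcyc : ∀ i j : ZMod d, H.Reachable (Sum.inr i) (Sum.inr j) := by
      intro i j
      have := hfwd i (j - i).val
      have heq : i + (((j - i).val : ℕ) : ZMod d) = j := by
        rw [ZMod.natCast_val, ZMod.cast_id]
        ring
      rw [heq] at this
      exact this
    -- vertex map into W used for lifting walks of G2
    set ψ : V → ({w : V // w ≠ v} ⊕ ZMod d) :=
      fun a => if h : a = v then Sum.inr 0 else Sum.inl ⟨a, h⟩ with hψ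
    have hψinl' : ∀ (a : V) (h : a ≠ v), ψ a = Sum.inl ⟨a, h⟩ := by
      intro a h; rw [hψ]; simp only [dif_neg h]
    have hψv : ∀ a : V, a = v → ψ a = Sum.inr 0 := by
      intro a h; rw [hψ]; simp only [dif_pos h]
    have hstep2 : ∀ a b : V, G2.Adj a b → H.Reachable (ψ a) (ψ b) := by
      intro a b hab
      by_cases ha : a = v
      · by_cases hb : b = v
        · exact absurd (ha.trans hb.symm) hab.ne
        · have hvb : G2.Adj v b := ha ▸ hab
          obtain ⟨i, hi⟩ : ∃ i, m i = b := by
            have hbn : b ∈ G.neighborSet v := (SimpleGraph.deleteEdges_adj.mp hvb).1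
            rw [← hr] at hbn; exact hbn
          have hadj := hMedge i (hi ▸ hvb)
          have hsub : (⟨b, hb⟩ : {w : V // w ≠ v}) = ⟨m i, hmv i⟩ := Subtype.ext hi.symm
          rw [hψv a ha, hψinl' b hb, hsub]
          exact (hcyc 0 i).trans hadj.symm.reachable
      · by_cases hb : b = v
        · have hva : G2.Adj v a := hb ▸ hab.symm
          obtain ⟨i, hi⟩ : ∃ i, m i = a := by
            have han : a ∈ G.neighborSet v := (SimpleGraph.deleteEdges_adj.mp hva).1
            rw [← hr] at han; exact han
          have hadj := hMedge i (hi ▸ hva)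
          have hsub : (⟨a, ha⟩ : {w : V // w ≠ v}) = ⟨m i, hmv i⟩ := Subtype.ext hi.symm
          rw [hψv b hb, hψinl' a ha, hsub]
          exact hadj.reachable.trans (hcyc i 0)
        · have := hGedge ⟨a, ha⟩ ⟨b, hb⟩ hab
          rw [hψinl' a ha, hψinl' b hb]
          exact this.reachable
    have lift : ∀ (a b : V), G2.Walk a b → H.Reachable (ψ a) (ψ b) := by
      intro a b w
      induction w with
      | nil => exact SimpleGraph.Reachable.refl _
      | cons h p ih => exact (hstep2 _ _ h).trans ih
    have hreach : ∀ a b : V, H.Reachable (ψ a) (ψ b) := by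
      intro a b
      obtain ⟨w⟩ := hG2conn.preconnected a b
      exact lift a b w
    constructor
    intro x y
    match x, y with
    | Sum.inl a, Sum.inl b =>
      have := hreach a.1 b.1
      rwa [hψinl' a.1 a.2, hψinl' b.1 b.2, Subtype.coe_eta, Subtype.coe_eta] at this
    | Sum.inl a, Sum.inr j =>
      have := hreach a.1 v
      rw [hψinl' a.1 a.2, hψv v rfl, Subtype.coe_eta] at this
      exact this.trans (hcyc 0 j)
    | Sum.inr i, Sum.inl b =>
      have := hreach v b.1
      rw [hψinl' b.1 b.2, hψv v rfl, Subtype.coe_eta] at this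
      exact (hcyc i 0).trans this
    | Sum.inr i, Sum.inr j => exact hcyc i j

end Aux

theorem stmt_9 (G : SimpleGraph V) (h3 : ThreeEdgeConn G) (v : V) (d : ℕ)
    (hd3 : 3 ≤ d) (hd5 : d ≤ 5)
    (hnotcut : (G.induce {w : V | w ≠ v}).Connected)
    (m : ZMod d → V) (hm : Function.Injective m)
    (hr : Set.range m = G.neighborSet v) :
    ThreeEdgeConn (localCubicMod G v d m) := by
  have hdel := main_conn G h3 v d hd3 hnotcut m hr
  constructor
  · have := hdel s(Sum.inr 0, Sum.inr 0) s(Sum.inr 0, Sum.inr 0)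
    exact this.mono (SimpleGraph.deleteEdges_le _)
  · exact hdel

end Frank
end
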